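/- (Theorem 2.6) Let G be a countable group admitting a Følner sequence, and let ν be a multiorder on G, i.e. a G-invariant Borel probability measure on the space Õ of orders of type ℤ on G. Then ν has the Følner property: for ν-almost every ≺ ∈ Õ, the sequence of order intervals ([e, b_n]^≺)_{n∈ℕ}, where b_n = bi_≺(n) is the n-th successor of e in ≺ (so that [e,b_n]^≺ = {bi_≺(0), bi_≺(1), …, bi_≺(n)}), is a Følner sequence in G. -/

import Mathlib

open MeasureTheory Filter
open scoped Classical symmDiff

/-- An *order of type ℤ* on `G`. -/
def IsZOrder {G : Type*} (r : G → G → Prop) : Prop :=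
  IsStrictTotalOrder G r ∧ (∀ a b : G, {g : G | r a g ∧ r g b}.Finite) ∧
    (∀ a : G, ∃ b, r b a) ∧ (∀ a : G, ∃ b, r a b)

/-- The relation on `G` encoded by an element of `{0,1}^{G×G}`. -/
def relOf {G : Type*} (x : G × G → Bool) : G → G → Prop := fun a b => x (a, b) = true

/-- The set `Õ` of orders of type ℤ on `G`, as a subset of `{0,1}^{G×G}`. -/
def ZOrders (G : Type*) : Set (G × G → Bool) := {x | IsZOrder (relOf x)}

/-- The `G`-action on `{0,1}^{G×G}` corresponding to `a (g(≺)) b ⟺ ag ≺ bg`. -/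
def actB {G : Type*} [Group G] (g : G) (x : G × G → Bool) : G × G → Bool :=
  fun p => x (p.1 * g, p.2 * g)

/-- `f : ℤ → G` is an anchored order isomorphism from `(ℤ,<)` to `(G,r)`. -/
def IsAnchoredIso {G : Type*} [One G] (r : G → G → Prop) (f : ℤ → G) : Prop :=
  Function.Bijective f ∧ f 0 = 1 ∧ ∀ i j : ℤ, i < j ↔ r (f i) (f j)

/-- The anchored bijection `bi_≺ : ℤ → G` associated with an order of type ℤ
(junk value if it does not exist). -/
noncomputable def biOf {G : Type*} [One G] (r : G → G → Prop) : ℤ → G :=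
  if h : ∃ f : ℤ → G, IsAnchoredIso r f then h.choose else fun _ => 1

/-- A Følner sequence in `G`: a sequence of nonempty finite sets `F n` with
`|F n △ g·F n| / |F n| → 0` for every `g ∈ G`. -/
def IsFolnerSeq {G : Type*} [Group G] (F : ℕ → Finset G) : Prop :=
  (∀ n, (F n).Nonempty) ∧ ∀ g : G,
    Tendsto (fun n => ((F n ∆ (F n).image (fun h => g * h)).card : ℝ) / (F n).card)
      atTop (nhds 0)

section Part1
variable {G : Type*} [Group G]

/-- L1: existence of an anchored iso for a Z-order. -/
lemma exists_anchoredIso (x : G × G → Bool) (hx : x ∈ ZOrders G) :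
    ∃ f : ℤ → G, IsAnchoredIso (relOf x) f := by
  obtain ⟨hsto, hfin, hmin, hmax⟩ := hx
  haveI := hsto
  letI : LinearOrder G := linearOrderOfSTO (relOf x)
  have hlt : ∀ a b : G, a < b ↔ relOf x a b := fun a b => Iff.rfl
  letI : LocallyFiniteOrder G := LocallyFiniteOrder.ofFiniteIcc (fun a b => by
    apply Set.Finite.subset (((hfin a b).insert a).insert b)
    intro c hc
    simp only [Set.mem_insert_iff, Set.mem_setOf_eq]
    rcases eq_or_lt_of_le hc.1 with h1 | h1
    · exact Or.inr (Or.inl h1.symm)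
    · rcases eq_or_lt_of_le hc.2 with h2 | h2
      · exact Or.inl h2
      · exact Or.inr (Or.inr ⟨h1, h2⟩))
  haveI : NoMinOrder G := ⟨fun a => (hmin a).imp fun b hb => hb⟩
  haveI : NoMaxOrder G := ⟨fun a => (hmax a).imp fun b hb => hb⟩
  letI : SuccOrder G := LinearLocallyFiniteOrder.succOrder (ι := G)
  letI : PredOrder G := LinearLocallyFiniteOrder.predOrder (ι := G)
  have φ : G ≃o ℤ := orderIsoIntOfLinearSuccPredArch
  refine ⟨fun k => φ.symm (k + φ 1), ?_, ?_, ?_⟩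
  · exact (φ.symm.toEquiv.bijective.comp (Equiv.addRight (φ 1)).bijective)
  · simp
  · intro i j
    constructor
    · intro h
      exact (hlt _ _).1 (by simpa using (add_lt_add_right h (φ 1)))
    · intro h
      have := (hlt _ _).2 h
      simpa using this

/-- strictly monotone bijection of ℤ fixing 0 is the identity -/
lemma strictMono_bij_int (ψ : ℤ ≃ ℤ) (hmono : StrictMono ψ) (h0 : ψ 0 = 0) : ∀ n, ψ n = n := by
  have hsucc : ∀ n : ℤ, ψ (n + 1) = ψ n + 1 := by
    intro n
    have h1 : ψ n + 1 ≤ ψ (n + 1) := hmono (lt_add_one n)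
    rcases eq_or_lt_of_le h1 with h | h
    · exact h.symm
    · exfalso
      set m := ψ.symm (ψ n + 1) with hm
      have hψm : ψ m = ψ n + 1 := ψ.apply_symm_apply _
      have h2 : n < m := hmono.lt_iff_lt.1 (by rw [hψm]; exact lt_add_one _)
      have h3 : m < n + 1 := hmono.lt_iff_lt.1 (by rw [hψm]; exact h)
      omega
  intro n
  induction n using Int.induction_on with
  | zero => exact h0
  | succ k ih => rw [hsucc, ih]
  | pred k ih =>
      have := hsucc (-(k:ℤ) - 1)
      rw [sub_add_cancel] at this
      omega

/-- L2: uniqueness of the anchored iso. -/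
lemma anchoredIso_unique {r : G → G → Prop} {f f' : ℤ → G}
    (hf : IsAnchoredIso r f) (hf' : IsAnchoredIso r f') : f = f' := by
  obtain ⟨hbij, h0, hord⟩ := hf
  obtain ⟨hbij', h0', hord'⟩ := hf'
  set e' := Equiv.ofBijective f' hbij' with he'
  set ψ : ℤ ≃ ℤ := (Equiv.ofBijective f hbij).trans e'.symm with hψ
  have hfψ : ∀ i, f' (ψ i) = f i := by
    intro i
    simp only [hψ, Equiv.trans_apply]
    exact e'.apply_symm_apply _
  have hmono : StrictMono ψ := by
    intro i j hij
    have : r (f' (ψ i)) (f' (ψ j)) := by rw [hfψ, hfψ]; exact (hord i j).1 hij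
    exact (hord' _ _).2 this
  have hψ0 : ψ 0 = 0 := by
    have : f' (ψ 0) = f' 0 := by rw [hfψ, h0, h0']
    exact hbij'.1 this
  funext i
  rw [← hfψ i, strictMono_bij_int ψ hmono hψ0]

lemma biOf_eq {r : G → G → Prop} {f : ℤ → G} (hf : IsAnchoredIso r f) : biOf r = f := by
  rw [biOf, dif_pos ⟨f, hf⟩]
  exact anchoredIso_unique (Exists.choose_spec (⟨f, hf⟩ : ∃ f, IsAnchoredIso r f)) hf

lemma biOf_spec {x : G × G → Bool} (hx : x ∈ ZOrders G) :
    IsAnchoredIso (relOf x) (biOf (relOf x)) := by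
  obtain ⟨f, hf⟩ := exists_anchoredIso x hx
  rw [biOf_eq hf]; exact hf

end Part1

section Part2
variable {G : Type*} [Group G]

lemma actB_actB (g h : G) (x : G × G → Bool) : actB g (actB h x) = actB (g * h) x := by
  funext p
  simp [actB, mul_assoc]

lemma actB_one (x : G × G → Bool) : actB (1 : G) x = x := by
  funext p
  simp [actB]

lemma relOf_actB (g : G) (x : G × G → Bool) (a b : G) :
    relOf (actB g x) a b ↔ relOf x (a * g) (b * g) := Iff.rfl

/-- L4: ZOrders is invariant under the action. -/
lemma actB_mem_ZOrders {x : G × G → Bool} (hx : x ∈ ZOrders G) (g : G) :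
    actB g x ∈ ZOrders G := by
  obtain ⟨hsto, hfin, hmin, hmax⟩ := hx
  haveI := hsto
  refine ⟨?_, ?_, ?_, ?_⟩
  · refine { trichotomous := ?_, irrefl := ?_, trans := ?_ }
    · exact fun a b h1 h2 => by
        rcases trichotomous_of (relOf x) (a * g) (b * g) with h | h | h
        · exact absurd h h1
        · exact mul_right_cancel h
        · exact absurd h h2
    · exact fun a => irrefl_of (relOf x) (a * g)
    · exact fun a b c hab hbc => trans_of (relOf x) hab hbc
  · intro a b
    apply Set.Finite.of_finite_image (f := (· * g))
    · apply Set.Finite.subset (hfin (a * g) (b * g))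
      rintro - ⟨c, ⟨h1, h2⟩, rfl⟩
      exact ⟨h1, h2⟩
    · exact Set.injOn_of_injective (mul_left_injective g)
  · intro a
    obtain ⟨b, hb⟩ := hmin (a * g)
    exact ⟨b * g⁻¹, by simpa [relOf_actB, mul_assoc] using hb⟩
  · intro a
    obtain ⟨b, hb⟩ := hmax (a * g)
    exact ⟨b * g⁻¹, by simpa [relOf_actB, mul_assoc] using hb⟩

/-- L5: equivariance of the anchored bijection. -/
lemma biOf_actB {x : G × G → Bool} (hx : x ∈ ZOrders G) {b : G} {p : ℤ}
    (hb : biOf (relOf x) p = b) :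
    biOf (relOf (actB b x)) = fun k => biOf (relOf x) (k + p) * b⁻¹ := by
  obtain ⟨hbij, h0, hord⟩ := biOf_spec hx
  apply biOf_eq
  refine ⟨?_, ?_, ?_⟩
  · exact (Equiv.mulRight b⁻¹).bijective.comp (hbij.comp (Equiv.addRight p).bijective)
  · simp [hb]
  · intro i j
    rw [relOf_actB]
    simp only [inv_mul_cancel_right]
    exact (add_lt_add_iff_right p).symm.trans (hord (i + p) (j + p))

/-- Q i b : the set of Z-orders whose anchored bijection sends i to b. -/
def QSet (G : Type*) [Group G] (i : ℤ) (b : G) : Set (G × G → Bool) :=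
  {x | x ∈ ZOrders G ∧ biOf (relOf x) i = b}

/-- Key bijection property. -/
lemma QSet_eq_preimage (i : ℤ) (b : G) :
    QSet G i b = (actB b) ⁻¹' (QSet G (-i) b⁻¹) := by
  ext x
  constructor
  · rintro ⟨hx, hbi⟩
    have heq := biOf_actB hx hbi
    refine ⟨actB_mem_ZOrders hx b, ?_⟩
    rw [heq]
    simp [(biOf_spec hx).2.1]
  · rintro ⟨hy, hbi⟩
    have hxy : actB b⁻¹ (actB b x) = x := by rw [actB_actB]; simp [actB_one]
    have hx : x ∈ ZOrders G := by
      rw [← hxy]; exact actB_mem_ZOrders hy b⁻¹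
    have heq := biOf_actB hy hbi
    rw [hxy] at heq
    refine ⟨hx, ?_⟩
    rw [heq]
    simp [(biOf_spec hy).2.1]

end Part2

section Part3
variable {G : Type*} [Group G] [Countable G]

lemma measurable_actB (g : G) : Measurable (actB g : (G × G → Bool) → (G × G → Bool)) :=
  measurable_pi_lambda _ (fun p => measurable_pi_apply _)

lemma measurableSet_coord (p : G × G) : MeasurableSet {x : G × G → Bool | x p = true} := by
  have h : {x : G × G → Bool | x p = true} = (fun x : G × G → Bool => x p) ⁻¹' {true} := rfl
  rw [h]; exact measurable_pi_apply p (measurableSet_singleton true)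

lemma meas1 (a b : G) :
    MeasurableSet {x : G × G → Bool | x (a,b) = true ∨ a = b ∨ x (b,a) = true} := by
  have h : {x : G × G → Bool | x (a,b) = true ∨ a = b ∨ x (b,a) = true} =
      {x : G × G → Bool | x (a,b) = true} ∪ ({x | a = b} ∪ {x | x (b,a) = true}) := by
    ext x; simp [Set.mem_union]
  rw [h]
  exact (measurableSet_coord _).union ((MeasurableSet.const _).union (measurableSet_coord _))

lemma meas2 (a b c : G) :
    MeasurableSet {x : G × G → Bool | x (a,b) = true ∧ x (b,c) = true → x (a,c) = true} := by
  have h : {x : G × G → Bool | x (a,b) = true ∧ x (b,c) = true → x (a,c) = true} =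
      ({x : G × G → Bool | x (a,b) = true} ∩ {x | x (b,c) = true})ᶜ ∪
        {x | x (a,c) = true} := by
    ext x; simp only [Set.mem_union, Set.mem_compl_iff, Set.mem_inter_iff, Set.mem_setOf_eq]
    tauto
  rw [h]
  exact (((measurableSet_coord _).inter (measurableSet_coord _)).compl).union
    (measurableSet_coord _)

lemma meas3 (a b g : G) (S : Finset G) :
    MeasurableSet {x : G × G → Bool | x (a,g) = true ∧ x (g,b) = true → g ∈ S} := by
  by_cases hg : g ∈ S
  · have h : {x : G × G → Bool | x (a,g) = true ∧ x (g,b) = true → g ∈ S} = Set.univ := by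
      ext x; simp [hg]
    rw [h]; exact MeasurableSet.univ
  · have h : {x : G × G → Bool | x (a,g) = true ∧ x (g,b) = true → g ∈ S} =
        ({x : G × G → Bool | x (a,g) = true} ∩ {x | x (g,b) = true})ᶜ := by
      ext x; simp [hg]
    rw [h]
    exact ((measurableSet_coord _).inter (measurableSet_coord _)).compl

lemma meas_iff (p q : G × G) (c : Prop) :
    MeasurableSet {x : G × G → Bool | (x p = true ∧ x q = true) ↔ c} := by
  by_cases hc : c
  · have h : {x : G × G → Bool | (x p = true ∧ x q = true) ↔ c} =
        {x : G × G → Bool | x p = true} ∩ {x | x q = true} := by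
      ext x; simp [hc]
    rw [h]; exact (measurableSet_coord _).inter (measurableSet_coord _)
  · have h : {x : G × G → Bool | (x p = true ∧ x q = true) ↔ c} =
        ({x : G × G → Bool | x p = true} ∩ {x | x q = true})ᶜ := by
      ext x; simp [hc]
    rw [h]; exact ((measurableSet_coord _).inter (measurableSet_coord _)).compl

lemma measurableSet_ZOrders : MeasurableSet (ZOrders G) := by
  have heq : ZOrders G =
      (⋂ (a : G) (b : G), {x : G × G → Bool | x (a,b) = true ∨ a = b ∨ x (b,a) = true}) ∩
      (⋂ (a : G), {x : G × G → Bool | x (a,a) = true}ᶜ) ∩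
      (⋂ (a : G) (b : G) (c : G),
        {x : G × G → Bool | x (a,b) = true ∧ x (b,c) = true → x (a,c) = true}) ∩
      (⋂ (a : G) (b : G), ⋃ (S : Finset G),
        ⋂ (g : G), {x : G × G → Bool | x (a,g) = true ∧ x (g,b) = true → g ∈ S}) ∩
      (⋂ (a : G), ⋃ (b : G), {x : G × G → Bool | x (b,a) = true}) ∩
      (⋂ (a : G), ⋃ (b : G), {x : G × G → Bool | x (a,b) = true}) := by
    ext x
    simp only [Set.mem_inter_iff, Set.mem_iInter, Set.mem_iUnion, Set.mem_compl_iff,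
      Set.mem_setOf_eq]
    constructor
    · rintro ⟨hsto, hfin, hmin, hmax⟩
      haveI := hsto
      refine ⟨⟨⟨⟨⟨?_, ?_⟩, ?_⟩, ?_⟩, ?_⟩, ?_⟩
      · exact fun a b => trichotomous_of (relOf x) a b
      · exact fun a => irrefl_of (relOf x) a
      · exact fun a b c h => trans_of (relOf x) h.1 h.2
      · intro a b
        exact ⟨(hfin a b).toFinset, fun g hg => (hfin a b).mem_toFinset.2 hg⟩
      · exact hmin
      · exact hmax
    · rintro ⟨⟨⟨⟨⟨htri, hirr⟩, htra⟩, hfin⟩, hmin⟩, hmax⟩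
      refine ⟨?_, ?_, hmin, hmax⟩
      · refine { trichotomous := fun a b h1 h2 => ((htri a b).resolve_left h1).resolve_right h2, irrefl := hirr, trans := ?_ }
        exact fun a b c h1 h2 => htra a b c ⟨h1, h2⟩
      · intro a b
        obtain ⟨S, hS⟩ := hfin a b
        exact Set.Finite.subset S.finite_toSet (fun g hg => hS g hg)
  rw [heq]
  exact (((((MeasurableSet.iInter fun a => MeasurableSet.iInter fun b => meas1 a b).inter
    (MeasurableSet.iInter fun a => (measurableSet_coord _).compl)).inter
    (MeasurableSet.iInter fun a => MeasurableSet.iInter fun b =>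
      MeasurableSet.iInter fun c => meas2 a b c)).inter
    (MeasurableSet.iInter fun a => MeasurableSet.iInter fun b =>
      MeasurableSet.iUnion fun S => MeasurableSet.iInter fun g => meas3 a b g S)).inter
    (MeasurableSet.iInter fun a => MeasurableSet.iUnion fun b =>
      measurableSet_coord _)).inter
    (MeasurableSet.iInter fun a => MeasurableSet.iUnion fun b => measurableSet_coord _)

/-- interval description, positive side -/
lemma interval_pos {x : G × G → Bool} (hx : x ∈ ZOrders G) {i : ℤ} (hi : 0 < i) :
    ∀ g : G, (relOf x 1 g ∧ relOf x g (biOf (relOf x) i)) ↔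
      g ∈ (Finset.Ioo (0:ℤ) i).image (biOf (relOf x)) := by
  obtain ⟨hbij, h0, hord⟩ := biOf_spec hx
  intro g
  constructor
  · rintro ⟨h1, h2⟩
    obtain ⟨j, rfl⟩ := hbij.2 g
    refine Finset.mem_image.2 ⟨j, Finset.mem_Ioo.2 ⟨?_, ?_⟩, rfl⟩
    · exact (hord 0 j).2 (by rwa [h0])
    · exact (hord j i).2 h2
  · intro hg
    obtain ⟨j, hj, rfl⟩ := Finset.mem_image.1 hg
    rw [Finset.mem_Ioo] at hj
    exact ⟨by rw [← h0]; exact (hord 0 j).1 hj.1, (hord j i).1 hj.2⟩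

/-- interval description, negative side -/
lemma interval_neg {x : G × G → Bool} (hx : x ∈ ZOrders G) {i : ℤ} (hi : i < 0) :
    ∀ g : G, (relOf x (biOf (relOf x) i) g ∧ relOf x g 1) ↔
      g ∈ (Finset.Ioo i (0:ℤ)).image (biOf (relOf x)) := by
  obtain ⟨hbij, h0, hord⟩ := biOf_spec hx
  intro g
  constructor
  · rintro ⟨h1, h2⟩
    obtain ⟨j, rfl⟩ := hbij.2 g
    refine Finset.mem_image.2 ⟨j, Finset.mem_Ioo.2 ⟨?_, ?_⟩, rfl⟩
    · exact (hord i j).2 h1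
    · exact (hord j 0).2 (by rwa [h0])
  · intro hg
    obtain ⟨j, hj, rfl⟩ := Finset.mem_image.1 hg
    rw [Finset.mem_Ioo] at hj
    exact ⟨(hord i j).1 hj.1, by rw [← h0]; exact (hord j 0).1 hj.2⟩

lemma biOf_pos_iff {x : G × G → Bool} (hx : x ∈ ZOrders G) {i : ℤ} (hi : 0 < i) (b : G) :
    biOf (relOf x) i = b ↔ relOf x 1 b ∧ ∃ S : Finset G, (S.card : ℤ) = i - 1 ∧
      ∀ g : G, ((relOf x 1 g ∧ relOf x g b) ↔ g ∈ S) := by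
  obtain ⟨hbij, h0, hord⟩ := biOf_spec hx
  constructor
  · rintro rfl
    refine ⟨by rw [← h0]; exact (hord 0 i).1 hi,
      (Finset.Ioo (0:ℤ) i).image (biOf (relOf x)), ?_, interval_pos hx hi⟩
    rw [Finset.card_image_of_injective _ hbij.1, Int.card_Ioo]
    omega
  · rintro ⟨hb, S, hcard, hS⟩
    obtain ⟨j, rfl⟩ := hbij.2 b
    have hj : 0 < j := (hord 0 j).2 (by rwa [h0])
    have hS' := interval_pos hx hj
    have hSeq : S = (Finset.Ioo (0:ℤ) j).image (biOf (relOf x)) := by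
      ext g; rw [← hS g, hS' g]
    have : (j : ℤ) - 1 = i - 1 := by
      rw [hSeq, Finset.card_image_of_injective _ hbij.1, Int.card_Ioo] at hcard
      omega
    have : j = i := by omega
    rw [this]

lemma biOf_neg_iff {x : G × G → Bool} (hx : x ∈ ZOrders G) {i : ℤ} (hi : i < 0) (b : G) :
    biOf (relOf x) i = b ↔ relOf x b 1 ∧ ∃ S : Finset G, (S.card : ℤ) = -i - 1 ∧
      ∀ g : G, ((relOf x b g ∧ relOf x g 1) ↔ g ∈ S) := by
  obtain ⟨hbij, h0, hord⟩ := biOf_spec hx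
  constructor
  · rintro rfl
    refine ⟨by rw [← h0]; exact (hord i 0).1 hi,
      (Finset.Ioo i (0:ℤ)).image (biOf (relOf x)), ?_, interval_neg hx hi⟩
    rw [Finset.card_image_of_injective _ hbij.1, Int.card_Ioo]
    omega
  · rintro ⟨hb, S, hcard, hS⟩
    obtain ⟨j, rfl⟩ := hbij.2 b
    have hj : j < 0 := (hord j 0).2 (by rwa [h0])
    have hS' := interval_neg hx hj
    have hSeq : S = (Finset.Ioo j (0:ℤ)).image (biOf (relOf x)) := by
      ext g; rw [← hS g, hS' g]
    have : -(j : ℤ) - 1 = -i - 1 := by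
      rw [hSeq, Finset.card_image_of_injective _ hbij.1, Int.card_Ioo] at hcard
      omega
    have : j = i := by omega
    rw [this]

lemma measurableSet_QSet (i : ℤ) (b : G) : MeasurableSet (QSet G i b) := by
  rcases lt_trichotomy i 0 with hi | rfl | hi
  · have heq : QSet G i b = ZOrders G ∩ ({x : G × G → Bool | x (b, 1) = true} ∩
        ⋃ (S : {S : Finset G // (S.card : ℤ) = -i - 1}), ⋂ (g : G),
          {x : G × G → Bool | (x (b,g) = true ∧ x (g,1) = true) ↔ g ∈ S.1}) := by
      ext x
      simp only [QSet, Set.mem_inter_iff, Set.mem_setOf_eq, Set.mem_iUnion, Set.mem_iInter]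
      constructor
      · rintro ⟨hx, hbi⟩
        obtain ⟨hb, S, hcard, hS⟩ := (biOf_neg_iff hx hi b).1 hbi
        exact ⟨hx, hb, ⟨S, hcard⟩, hS⟩
      · rintro ⟨hx, hb, ⟨S, hcard⟩, hS⟩
        exact ⟨hx, (biOf_neg_iff hx hi b).2 ⟨hb, S, hcard, hS⟩⟩
    rw [heq]
    exact measurableSet_ZOrders.inter ((measurableSet_coord _).inter
      (MeasurableSet.iUnion fun S => MeasurableSet.iInter fun g => meas_iff _ _ _))
  · have heq : QSet G 0 b = if b = 1 then ZOrders G else ∅ := by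
      ext x
      simp only [QSet, Set.mem_setOf_eq]
      split_ifs with hb
      · subst hb
        exact ⟨fun h => h.1, fun hx => ⟨hx, (biOf_spec hx).2.1⟩⟩
      · simp only [Set.mem_empty_iff_false, iff_false]
        rintro ⟨hx, hbi⟩
        exact hb (hbi ▸ ((biOf_spec hx).2.1).symm ▸ rfl)
    rw [heq]
    split_ifs
    · exact measurableSet_ZOrders
    · exact MeasurableSet.empty
  · have heq : QSet G i b = ZOrders G ∩ ({x : G × G → Bool | x (1, b) = true} ∩
        ⋃ (S : {S : Finset G // (S.card : ℤ) = i - 1}), ⋂ (g : G),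
          {x : G × G → Bool | (x (1,g) = true ∧ x (g,b) = true) ↔ g ∈ S.1}) := by
      ext x
      simp only [QSet, Set.mem_inter_iff, Set.mem_setOf_eq, Set.mem_iUnion, Set.mem_iInter]
      constructor
      · rintro ⟨hx, hbi⟩
        obtain ⟨hb, S, hcard, hS⟩ := (biOf_pos_iff hx hi b).1 hbi
        exact ⟨hx, hb, ⟨S, hcard⟩, hS⟩
      · rintro ⟨hx, hb, ⟨S, hcard⟩, hS⟩
        exact ⟨hx, (biOf_pos_iff hx hi b).2 ⟨hb, S, hcard, hS⟩⟩
    rw [heq]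
    exact measurableSet_ZOrders.inter ((measurableSet_coord _).inter
      (MeasurableSet.iUnion fun S => MeasurableSet.iInter fun g => meas_iff _ _ _))

end Part3

section Part4
variable {G : Type*} [Group G] [Countable G]

/-- The successor map on orders. -/
noncomputable def TT (G : Type*) [Group G] : (G × G → Bool) → (G × G → Bool) :=
  fun x => if x ∈ ZOrders G then actB (biOf (relOf x) 1) x else x

lemma TT_of_mem {x : G × G → Bool} (hx : x ∈ ZOrders G) :
    TT G x = actB (biOf (relOf x) 1) x := if_pos hx

lemma TT_iter {x : G × G → Bool} (hx : x ∈ ZOrders G) (i : ℕ) :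
    (TT G)^[i] x = actB (biOf (relOf x) (i : ℤ)) x := by
  induction i with
  | zero =>
      simp only [Function.iterate_zero, id_eq, Nat.cast_zero]
      rw [(biOf_spec hx).2.1, actB_one]
  | succ i ih =>
      rw [Function.iterate_succ_apply', ih]
      have hy : actB (biOf (relOf x) (i : ℤ)) x ∈ ZOrders G := actB_mem_ZOrders hx _
      rw [TT_of_mem hy]
      rw [biOf_actB hx rfl, actB_actB]
      congr 1
      simp only [inv_mul_cancel_right]
      push_cast
      ring_nf

lemma TT_iter_mem {x : G × G → Bool} (hx : x ∈ ZOrders G) (i : ℕ) :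
    (TT G)^[i] x ∈ ZOrders G := by
  rw [TT_iter hx]; exact actB_mem_ZOrders hx _

lemma biOf_TT_iter {x : G × G → Bool} (hx : x ∈ ZOrders G) (i : ℕ) :
    biOf (relOf ((TT G)^[i] x)) =
      fun k => biOf (relOf x) (k + i) * (biOf (relOf x) (i : ℤ))⁻¹ := by
  rw [TT_iter hx]
  exact biOf_actB hx rfl

lemma TT_preimage (S : Set (G × G → Bool)) :
    TT G ⁻¹' S = (⋃ b : G, (QSet G 1 b ∩ actB b ⁻¹' S)) ∪ ((ZOrders G)ᶜ ∩ S) := by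
  ext x
  by_cases hx : x ∈ ZOrders G
  · simp only [Set.mem_preimage, TT_of_mem hx, Set.mem_union, Set.mem_iUnion,
      Set.mem_inter_iff, Set.mem_compl_iff, QSet, Set.mem_setOf_eq, Set.mem_preimage]
    constructor
    · intro h
      exact Or.inl ⟨biOf (relOf x) 1, ⟨hx, rfl⟩, h⟩
    · rintro (⟨b, ⟨-, rfl⟩, h⟩ | ⟨h, -⟩)
      · exact h
      · exact absurd hx h
  · have : TT G x = x := if_neg hx
    simp only [Set.mem_preimage, this, Set.mem_union, Set.mem_iUnion, Set.mem_inter_iff,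
      Set.mem_compl_iff, QSet, Set.mem_setOf_eq]
    constructor
    · intro h; exact Or.inr ⟨hx, h⟩
    · rintro (⟨b, ⟨hx', -⟩, -⟩ | ⟨-, h⟩)
      · exact absurd hx' hx
      · exact h

lemma measurable_TT : Measurable (TT G) := by
  intro S hS
  rw [TT_preimage]
  exact ((MeasurableSet.iUnion fun b =>
    (measurableSet_QSet 1 b).inter ((measurable_actB b) hS)).union
    (measurableSet_ZOrders.compl.inter hS))

lemma QSet_disjoint (i : ℤ) : Pairwise (Function.onFun Disjoint (fun b : G => QSet G i b)) := by
  intro b b' hbb'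
  rw [Function.onFun, Set.disjoint_left]
  rintro x ⟨-, h1⟩ ⟨-, h2⟩
  exact hbb' (h1 ▸ h2.symm ▸ rfl)

lemma meas_union_null' {X : Type*} [MeasurableSpace X] (μ : Measure X) {A B : Set X}
    (hB : μ B = 0) : μ (A ∪ B) = μ A := by
  apply le_antisymm
  · calc μ (A ∪ B) ≤ μ A + μ B := measure_union_le A B
      _ = μ A := by rw [hB, add_zero]
  · exact measure_mono Set.subset_union_left

lemma measurePreserving_TT (ν : Measure (G × G → Bool)) [IsProbabilityMeasure ν]
    (hsupp : ν (ZOrders G) = 1) (hinv : ∀ g : G, Measure.map (actB g) ν = ν) :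
    MeasurePreserving (TT G) ν ν := by
  have hZc : ν (ZOrders G)ᶜ = 0 := by
    have h := measure_compl measurableSet_ZOrders (measure_ne_top ν _)
    rw [hsupp, measure_univ] at h
    simpa using h
  have hactB : ∀ (b : G) (S : Set (G × G → Bool)), MeasurableSet S →
      ν (actB b ⁻¹' S) = ν S := by
    intro b S hS
    conv_rhs => rw [← hinv b]
    rw [Measure.map_apply (measurable_actB b) hS]
  refine ⟨measurable_TT, ?_⟩
  apply Measure.ext
  intro S hS
  rw [Measure.map_apply measurable_TT hS, TT_preimage]
  have h1 : ν ((⋃ b : G, (QSet G 1 b ∩ actB b ⁻¹' S)) ∪ ((ZOrders G)ᶜ ∩ S)) =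
      ν (⋃ b : G, (QSet G 1 b ∩ actB b ⁻¹' S)) :=
    meas_union_null' ν (measure_mono_null Set.inter_subset_left hZc)
  rw [h1]
  have h2 : ν (⋃ b : G, (QSet G 1 b ∩ actB b ⁻¹' S)) =
      ∑' b : G, ν (QSet G 1 b ∩ actB b ⁻¹' S) := by
    apply measure_iUnion
    · intro b b' hbb'
      exact Disjoint.mono Set.inter_subset_left Set.inter_subset_left
        (QSet_disjoint 1 hbb')
    · exact fun b => (measurableSet_QSet 1 b).inter ((measurable_actB b) hS)
  rw [h2]
  have h3 : ∀ b : G, ν (QSet G 1 b ∩ actB b ⁻¹' S) = ν (QSet G (-1) b⁻¹ ∩ S) := by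
    intro b
    rw [QSet_eq_preimage 1 b, ← Set.preimage_inter]
    exact hactB b _ ((measurableSet_QSet _ _).inter hS)
  simp_rw [h3]
  have h4 : ∑' b : G, ν (QSet G (-1) b⁻¹ ∩ S) = ν (⋃ b : G, (QSet G (-1) b⁻¹ ∩ S)) := by
    symm
    apply measure_iUnion
    · intro b b' hbb'
      refine Disjoint.mono Set.inter_subset_left Set.inter_subset_left
        (QSet_disjoint (-1) ?_)
      exact fun h => hbb' (inv_injective h)
    · exact fun b => (measurableSet_QSet _ _).inter hS
  rw [h4]
  have h5 : (⋃ b : G, (QSet G (-1) b⁻¹ ∩ S)) = ZOrders G ∩ S := by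
    ext x
    simp only [Set.mem_iUnion, Set.mem_inter_iff, QSet, Set.mem_setOf_eq]
    constructor
    · rintro ⟨b, ⟨hx, -⟩, hxS⟩
      exact ⟨hx, hxS⟩
    · rintro ⟨hx, hxS⟩
      exact ⟨(biOf (relOf x) (-1))⁻¹, ⟨hx, by rw [inv_inv]⟩, hxS⟩
  rw [h5]
  have h6 : ν (S \ ZOrders G) = 0 :=
    measure_mono_null (Set.diff_subset_compl _ _) hZc
  have h7 : S = (ZOrders G ∩ S) ∪ (S \ ZOrders G) := by
    rw [Set.inter_comm, Set.inter_union_diff]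
  conv_rhs => rw [h7]
  rw [meas_union_null' ν h6]

end Part4

section Maximal
variable {X : Type*} [MeasurableSpace X]

lemma hopf_maximal (μ : Measure X) [IsProbabilityMeasure μ] (T : X → X)
    (hT : MeasurePreserving T μ μ) (E : Set X) (hE : MeasurableSet E)
    {lam : ℝ} (hlam : 0 < lam) :
    lam * (μ {x | ∃ n : ℕ, lam * (n + 1) <
      ∑ i ∈ Finset.range (n + 1), E.indicator (fun _ => (1:ℝ)) (T^[i] x)}).toReal
      ≤ (μ E).toReal := by
  set u : X → ℝ := E.indicator (fun _ => (1:ℝ)) with hu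
  have hu_meas : Measurable u := measurable_const.indicator hE
  have hu0 : ∀ y, 0 ≤ u y := fun y => Set.indicator_apply_nonneg (fun _ => zero_le_one)
  have hu1 : ∀ y, u y ≤ 1 := by
    intro y
    by_cases hy : y ∈ E <;> simp [hu, Set.indicator_apply, hy]
  set gf : X → ℝ := fun x => u x - lam with hgf
  have hgf_meas : Measurable gf := hu_meas.sub measurable_const
  have hgf_bd : ∀ y, |gf y| ≤ 1 + lam := by
    intro y
    rw [abs_le]
    constructor <;> simp only [hgf] <;> nlinarith [hu0 y, hu1 y]
  set S : ℕ → X → ℝ := fun n x => ∑ i ∈ Finset.range n, gf (T^[i] x) with hSdef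
  have hS_meas : ∀ n, Measurable (S n) := by
    intro n
    apply Finset.measurable_sum
    intro i _
    exact hgf_meas.comp (hT.measurable.iterate i)
  have hS0 : ∀ x, S 0 x = 0 := fun x => by simp [hSdef]
  have hS_rec : ∀ n x, S (n + 1) x = gf x + S n (T x) := by
    intro n x
    rw [hSdef]
    simp only
    rw [Finset.sum_range_succ']
    simp only [Function.iterate_zero, id_eq, Function.iterate_succ_apply]
    ring
  have hS_bd : ∀ n x, |S n x| ≤ n * (1 + lam) := by
    intro n x
    calc |S n x| ≤ ∑ i ∈ Finset.range n, |gf (T^[i] x)| := Finset.abs_sum_le_sum_abs _ _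
      _ ≤ ∑ _i ∈ Finset.range n, (1 + lam) := Finset.sum_le_sum fun i _ => hgf_bd _
      _ = n * (1 + lam) := by rw [Finset.sum_const, Finset.card_range, nsmul_eq_mul]
  set M : ℕ → X → ℝ := fun N x =>
    (Finset.range (N + 1)).sup' Finset.nonempty_range_add_one (fun n => S n x) with hMdef
  have hM_le : ∀ N x n, n ∈ Finset.range (N + 1) → S n x ≤ M N x := by
    intro N x n hn
    rw [hMdef]
    exact Finset.le_sup' (fun m => S m x) hn
  have hM_sup_le : ∀ N x c, (∀ n ∈ Finset.range (N + 1), S n x ≤ c) → M N x ≤ c := by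
    intro N x c h
    rw [hMdef]
    exact Finset.sup'_le _ _ h
  have hM_rec : ∀ N x, M (N + 1) x = max (S (N + 1) x) (M N x) := by
    intro N x
    apply le_antisymm
    · apply hM_sup_le
      intro n hn
      rw [Finset.mem_range] at hn
      rcases Nat.lt_succ_iff_lt_or_eq.1 hn with h | rfl
      · exact le_trans (hM_le N x n (Finset.mem_range.2 h)) (le_max_right _ _)
      · exact le_max_left _ _
    · apply max_le
      · exact hM_le (N + 1) x (N + 1) (Finset.mem_range.2 (by omega))
      · apply hM_sup_le
        intro n hn
        rw [Finset.mem_range] at hn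
        exact hM_le (N + 1) x n (Finset.mem_range.2 (by omega))
  have hM0 : ∀ N x, 0 ≤ M N x := by
    intro N x
    have h := hM_le N x 0 (Finset.mem_range.2 (Nat.succ_pos N))
    rwa [hS0] at h
  have hM_meas : ∀ N, Measurable (M N) := by
    intro N
    induction N with
    | zero =>
        have hz : M 0 = S 0 := by
          funext x
          apply le_antisymm
          · apply hM_sup_le
            intro n hn
            rw [Finset.mem_range] at hn
            have : n = 0 := by omega
            rw [this]
          · exact hM_le 0 x 0 (by simp)
        rw [hz]; exact hS_meas 0
    | succ N ih =>
        have hh : M (N + 1) = fun x => max (S (N + 1) x) (M N x) := funext fun x => hM_rec N x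
        rw [hh]
        exact (hS_meas (N + 1)).max ih
  have hM_bd : ∀ N x, |M N x| ≤ (N + 1) * (1 + lam) := by
    intro N x
    rw [abs_le]
    constructor
    · linarith [hM0 N x, mul_nonneg (by positivity : (0:ℝ) ≤ (N:ℝ) + 1) (by linarith : (0:ℝ) ≤ 1 + lam)]
    · apply hM_sup_le
      intro n hn
      have hn' : (n : ℝ) ≤ N := by
        have := Finset.mem_range.1 hn
        exact_mod_cast Nat.lt_succ_iff.1 this
      calc S n x ≤ |S n x| := le_abs_self _
        _ ≤ n * (1 + lam) := hS_bd n x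
        _ ≤ (N + 1) * (1 + lam) := by nlinarith
  have hM_mono : ∀ N x, M N x ≤ M (N + 1) x := by
    intro N x
    rw [hM_rec]
    exact le_max_right _ _
  have hInt_M : ∀ N, Integrable (M N) μ := by
    intro N
    refine Integrable.mono' (integrable_const ((N + 1) * (1 + lam))) ((hM_meas N).aestronglyMeasurable) ?_
    exact Filter.Eventually.of_forall fun x => by
      rw [Real.norm_eq_abs]; exact hM_bd N x
  have hInt_u : Integrable u μ := by
    refine Integrable.mono' (integrable_const 1) (hu_meas.aestronglyMeasurable) ?_
    exact Filter.Eventually.of_forall fun x => by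
      rw [Real.norm_eq_abs, abs_of_nonneg (hu0 x)]; exact hu1 x
  -- key pointwise inequality
  have hkey : ∀ N x, M (N + 1) x ≤ max 0 (gf x + M N (T x)) := by
    intro N x
    apply hM_sup_le
    intro n hn
    match n with
    | 0 => rw [hS0]; exact le_max_left _ _
    | Nat.succ m =>
        have hm : m ∈ Finset.range (N + 1) := by
          rw [Finset.mem_range] at hn ⊢
          omega
        have h1 : S m (T x) ≤ M N (T x) := hM_le N (T x) m hm
        calc S (m + 1) x = gf x + S m (T x) := hS_rec m x
          _ ≤ gf x + M N (T x) := by linarith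
          _ ≤ max 0 (gf x + M N (T x)) := le_max_right _ _
  -- the maximal sets
  set A : ℕ → Set X := fun N => {x | 0 < M (N + 1) x} with hAdef
  have hA_meas : ∀ N, MeasurableSet (A N) :=
    fun N => measurableSet_lt measurable_const (hM_meas (N + 1))
  have hpt : ∀ N x, M (N + 1) x - M N (T x) ≤ (A N).indicator gf x := by
    intro N x
    by_cases hx : x ∈ A N
    · rw [Set.indicator_of_mem hx]
      have hlt : 0 < M (N + 1) x := hx
      have hmax := hkey N x
      rcases le_or_gt (gf x + M N (T x)) 0 with hc | hc
      · exfalso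
        rw [max_eq_left hc] at hmax
        linarith
      · rw [max_eq_right (le_of_lt hc)] at hmax
        linarith
    · rw [Set.indicator_of_notMem hx]
      have h1 : M (N + 1) x ≤ 0 := le_of_not_gt hx
      have h2 : M (N + 1) x = 0 := le_antisymm h1 (hM0 _ _)
      have h3 : 0 ≤ M N (T x) := hM0 _ _
      linarith
  -- integrate
  have hIntMT : ∀ N, Integrable (fun x => M N (T x)) μ := by
    intro N
    refine Integrable.mono' (integrable_const ((N + 1) * (1 + lam)))
      (((hM_meas N).comp hT.measurable).aestronglyMeasurable) ?_
    exact Filter.Eventually.of_forall fun x => by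
      rw [Real.norm_eq_abs]; exact hM_bd N (T x)
  have hintMT : ∀ N, ∫ x, M N (T x) ∂μ = ∫ x, M N x ∂μ := by
    intro N
    calc ∫ x, M N (T x) ∂μ = ∫ y, M N y ∂(Measure.map T μ) :=
          (integral_map hT.measurable.aemeasurable
            (by rw [hT.map_eq]; exact (hM_meas N).aestronglyMeasurable)).symm
      _ = ∫ x, M N x ∂μ := by rw [hT.map_eq]
  have hIntInd : ∀ N, Integrable ((A N).indicator gf) μ := by
    intro N
    refine Integrable.mono' (integrable_const (1 + lam))
      ((hgf_meas.indicator (hA_meas N)).aestronglyMeasurable) ?_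
    refine Filter.Eventually.of_forall fun x => ?_
    rw [Real.norm_eq_abs]
    by_cases hx : x ∈ A N
    · rw [Set.indicator_of_mem hx]; exact hgf_bd x
    · rw [Set.indicator_of_notMem hx]; simp; linarith
  have hstep : ∀ N, 0 ≤ ∫ x, (A N).indicator gf x ∂μ := by
    intro N
    have h1 : ∫ x, (M (N + 1) x - M N (T x)) ∂μ ≤ ∫ x, (A N).indicator gf x ∂μ := by
      apply integral_mono ((hInt_M (N + 1)).sub (hIntMT N)) (hIntInd N)
      exact fun x => hpt N x
    have h2 : ∫ x, (M (N + 1) x - M N (T x)) ∂μ =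
        ∫ x, M (N + 1) x ∂μ - ∫ x, M N (T x) ∂μ :=
      integral_sub (hInt_M (N + 1)) (hIntMT N)
    have h3 : ∫ x, M N x ∂μ ≤ ∫ x, M (N + 1) x ∂μ :=
      integral_mono (hInt_M N) (hInt_M (N + 1)) (fun x => hM_mono N x)
    rw [h2, hintMT N] at h1
    linarith
  have hbound : ∀ N, lam * (μ (A N)).toReal ≤ (μ E).toReal := by
    intro N
    have h1 : ∫ x, (A N).indicator gf x ∂μ =
        ∫ x, (A N).indicator u x ∂μ - lam * (μ (A N)).toReal := by
      have heq : (A N).indicator gf = fun x => (A N).indicator u x -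
          (A N).indicator (fun _ => lam) x := by
        funext x
        by_cases hx : x ∈ A N
        · simp [Set.indicator_of_mem hx, hgf]
        · simp [Set.indicator_of_notMem hx]
      rw [heq]
      rw [integral_sub]
      · rw [integral_indicator_const _ (hA_meas N)]
        simp [smul_eq_mul, mul_comm, measureReal_def]
      · refine Integrable.mono' (integrable_const 1) ((hu_meas.indicator (hA_meas N)).aestronglyMeasurable) ?_
        refine Filter.Eventually.of_forall fun x => ?_
        rw [Real.norm_eq_abs]
        by_cases hx : x ∈ A N
        · rw [Set.indicator_of_mem hx, abs_of_nonneg (hu0 x)]; exact hu1 x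
        · rw [Set.indicator_of_notMem hx]; simp
      · exact (integrable_const lam).indicator (hA_meas N)
    have h2 : ∫ x, (A N).indicator u x ∂μ ≤ ∫ x, u x ∂μ := by
      apply integral_mono _ hInt_u
      · intro x
        exact Set.indicator_le_self' (fun y _ => hu0 y) x
      · exact hInt_u.indicator (hA_meas N)
    have h3 : ∫ x, u x ∂μ = (μ E).toReal := by
      rw [hu, integral_indicator_const _ hE]
      simp [measureReal_def]
    have h0 := hstep N
    rw [h1] at h0
    linarith
  -- pass to the union
  set Tar : Set X := {x | ∃ n : ℕ, lam * (n + 1) <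
      ∑ i ∈ Finset.range (n + 1), u (T^[i] x)} with hTar
  have hTarsub : Tar ⊆ ⋃ N, A N := by
    intro x hx
    obtain ⟨n, hn⟩ := hx
    refine Set.mem_iUnion.2 ⟨n, ?_⟩
    have hsum : S (n + 1) x = (∑ i ∈ Finset.range (n + 1), u (T^[i] x)) - lam * (n + 1) := by
      rw [hSdef]
      simp only [hgf]
      rw [Finset.sum_sub_distrib, Finset.sum_const, Finset.card_range, nsmul_eq_mul]
      push_cast
      ring
    have h1 : 0 < S (n + 1) x := by rw [hsum]; linarith
    have h2 : S (n + 1) x ≤ M (n + 1) x :=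
      hM_le (n + 1) x (n + 1) (Finset.mem_range.2 (by omega))
    exact lt_of_lt_of_le h1 h2
  have hAmono : Monotone A := by
    intro N N' hNN'
    intro x hx
    have hMM : M (N + 1) x ≤ M (N' + 1) x := by
      apply hM_sup_le
      intro n hn
      apply hM_le
      rw [Finset.mem_range] at hn ⊢
      omega
    exact lt_of_lt_of_le hx hMM
  have hTmeas : Tendsto (fun N => (μ (A N)).toReal) atTop (nhds ((μ (⋃ N, A N)).toReal)) := by
    have h := tendsto_measure_iUnion_atTop (μ := μ) hAmono
    exact (ENNReal.tendsto_toReal (measure_ne_top μ _)).comp h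
  have hlim : lam * (μ (⋃ N, A N)).toReal ≤ (μ E).toReal := by
    have := le_of_tendsto (hTmeas.const_mul lam) (Filter.Eventually.of_forall hbound)
    exact this
  have hfinal : (μ Tar).toReal ≤ (μ (⋃ N, A N)).toReal :=
    ENNReal.toReal_mono (measure_ne_top μ _) (measure_mono hTarsub)
  calc lam * (μ Tar).toReal ≤ lam * (μ (⋃ N, A N)).toReal := by nlinarith
    _ ≤ (μ E).toReal := hlim

end Maximal

section Part6
variable {G : Type*} [Group G] [Countable G]

/-- The set of orders where `g` is outside the window `[-M, M]` of positions. -/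
def ESet (G : Type*) [Group G] (g : G) (M : ℕ) : Set (G × G → Bool) :=
  {x | x ∈ ZOrders G ∧ ∀ k : ℤ, |k| ≤ (M : ℤ) → biOf (relOf x) k ≠ g}

lemma measurableSet_ESet (g : G) (M : ℕ) : MeasurableSet (ESet G g M) := by
  have heq : ESet G g M = ZOrders G ∩ ⋂ (k : ℤ),
      (if |k| ≤ (M : ℤ) then (QSet G k g)ᶜ else Set.univ) := by
    ext x
    simp only [ESet, Set.mem_setOf_eq, Set.mem_inter_iff, Set.mem_iInter]
    constructor
    · rintro ⟨hx, h⟩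
      refine ⟨hx, fun k => ?_⟩
      split_ifs with hk
      · intro hq
        exact h k hk hq.2
      · trivial
    · rintro ⟨hx, h⟩
      refine ⟨hx, fun k hk hbi => ?_⟩
      have h2 := h k
      rw [if_pos hk] at h2
      exact h2 ⟨hx, hbi⟩
  rw [heq]
  refine measurableSet_ZOrders.inter (MeasurableSet.iInter fun k => ?_)
  split_ifs
  · exact (measurableSet_QSet k g).compl
  · exact MeasurableSet.univ

lemma ESet_antitone (g : G) {M M' : ℕ} (h : M ≤ M') : ESet G g M' ⊆ ESet G g M := by
  rintro x ⟨hx, hk⟩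
  exact ⟨hx, fun k hkM => hk k (le_trans hkM (by exact_mod_cast h))⟩

lemma iInter_ESet (g : G) : (⋂ M : ℕ, ESet G g M) = ∅ := by
  ext x
  simp only [Set.mem_iInter, Set.mem_empty_iff_false, iff_false, not_forall]
  by_cases hx : x ∈ ZOrders G
  · obtain ⟨hbij, -, -⟩ := biOf_spec hx
    obtain ⟨k, hk⟩ := hbij.2 g
    refine ⟨|k|.toNat, fun hmem => ?_⟩
    exact hmem.2 k (le_of_eq (Int.toNat_of_nonneg (abs_nonneg k)).symm) hk
  · exact ⟨0, fun hmem => hx hmem.1⟩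

lemma escape {x : G × G → Bool} (hx : x ∈ ZOrders G) {g : G} {M i : ℕ}
    (h : (TT G)^[i] x ∉ ESet G g M) :
    ∃ k : ℤ, |k| ≤ (M : ℤ) ∧
      biOf (relOf x) (k + i) = g * biOf (relOf x) (i : ℤ) := by
  have hmem := TT_iter_mem hx i
  have h' : ¬ (∀ k : ℤ, |k| ≤ (M : ℤ) → biOf (relOf ((TT G)^[i] x)) k ≠ g) :=
    fun hall => h ⟨hmem, hall⟩
  push_neg at h'
  obtain ⟨k, hk, hbi⟩ := h'
  rw [biOf_TT_iter hx i] at hbi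
  simp only at hbi
  exact ⟨k, hk, by rw [← mul_inv_eq_iff_eq_mul]; exact hbi⟩

lemma filter_tri_card (n M : ℕ) (P : ℕ → Prop) :
    ((Finset.range (n + 1)).filter (fun i => i < M ∨ n < i + M ∨ P i)).card
      ≤ 2 * M + ((Finset.range (n + 1)).filter P).card := by
  classical
  have h1 : (Finset.range (n + 1)).filter (fun i => i < M ∨ n < i + M ∨ P i) ⊆
      (((Finset.range (n + 1)).filter (fun i => i < M)) ∪
      ((Finset.range (n + 1)).filter (fun i => n < i + M))) ∪
      ((Finset.range (n + 1)).filter P) := by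
    intro i hi
    rw [Finset.mem_filter] at hi
    simp only [Finset.mem_union, Finset.mem_filter]
    rcases hi.2 with h | h | h
    · exact Or.inl (Or.inl ⟨hi.1, h⟩)
    · exact Or.inl (Or.inr ⟨hi.1, h⟩)
    · exact Or.inr ⟨hi.1, h⟩
  have hA : ((Finset.range (n + 1)).filter (fun i => i < M)).card ≤ M := by
    calc ((Finset.range (n + 1)).filter (fun i => i < M)).card
        ≤ (Finset.range M).card := Finset.card_le_card (by
          intro i hi
          rw [Finset.mem_filter] at hi
          exact Finset.mem_range.2 hi.2)
      _ = M := Finset.card_range M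
  have hB : ((Finset.range (n + 1)).filter (fun i => n < i + M)).card ≤ M := by
    have := Finset.card_le_card_of_injOn (f := fun i => n - i)
      (s := (Finset.range (n + 1)).filter (fun i => n < i + M)) (t := Finset.range M)
      (by
        intro i hi
        rw [Finset.mem_coe, Finset.mem_filter, Finset.mem_range] at hi
        rw [Finset.mem_coe, Finset.mem_range]
        show n - i < M
        omega)
      (by
        intro i hi j hj hij
        rw [Finset.coe_filter, Set.mem_setOf_eq, Finset.mem_range] at hi hj
        simp only at hij
        omega)
    rwa [Finset.card_range] at this
  calc ((Finset.range (n + 1)).filter (fun i => i < M ∨ n < i + M ∨ P i)).card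
      ≤ _ := Finset.card_le_card h1
    _ ≤ (((Finset.range (n + 1)).filter (fun i => i < M)) ∪
        ((Finset.range (n + 1)).filter (fun i => n < i + M))).card +
        ((Finset.range (n + 1)).filter P).card := Finset.card_union_le _ _
    _ ≤ (((Finset.range (n + 1)).filter (fun i => i < M)).card +
        ((Finset.range (n + 1)).filter (fun i => n < i + M)).card) +
        ((Finset.range (n + 1)).filter P).card := by
          exact Nat.add_le_add_right (Finset.card_union_le _ _) _
    _ ≤ 2 * M + ((Finset.range (n + 1)).filter P).card := by omega

lemma F_card {x : G × G → Bool} (hx : x ∈ ZOrders G) (n : ℕ) :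
    ((Finset.range (n + 1)).image (fun i : ℕ => biOf (relOf x) (i : ℤ))).card = n + 1 := by
  rw [Finset.card_image_of_injective _ (fun i j h => ?_), Finset.card_range]
  exact Nat.cast_injective ((biOf_spec hx).1.1 h)

lemma sdiff_sub {x : G × G → Bool} (hx : x ∈ ZOrders G) (g : G) (M n : ℕ) :
    ((Finset.range (n + 1)).image (fun i : ℕ => biOf (relOf x) (i : ℤ))) \
      ((Finset.range (n + 1)).image (fun i : ℕ => biOf (relOf x) (i : ℤ))).image
        (fun h => g * h) ⊆
    ((Finset.range (n + 1)).filter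
      (fun i => i < M ∨ n < i + M ∨ (TT G)^[i] x ∈ ESet G g⁻¹ M)).image
        (fun i : ℕ => biOf (relOf x) (i : ℤ)) := by
  classical
  intro c hc
  rw [Finset.mem_sdiff] at hc
  obtain ⟨i, hi, rfl⟩ := Finset.mem_image.1 hc.1
  refine Finset.mem_image.2 ⟨i, Finset.mem_filter.2 ⟨hi, ?_⟩, rfl⟩
  by_contra hcon
  push_neg at hcon
  obtain ⟨h1, h2, h3⟩ := hcon
  obtain ⟨k, hk, hbi⟩ := escape hx h3
  rw [abs_le] at hk
  rw [Finset.mem_range] at hi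
  apply hc.2
  set j : ℕ := (k + i).toNat with hj
  have hji : (j : ℤ) = k + i := Int.toNat_of_nonneg (by omega)
  refine Finset.mem_image.2 ⟨biOf (relOf x) (j : ℤ), Finset.mem_image.2 ⟨j, ?_, rfl⟩, ?_⟩
  · rw [Finset.mem_range]; omega
  · rw [hji, hbi]
    simp [mul_assoc]

lemma imgdiff_sub {x : G × G → Bool} (hx : x ∈ ZOrders G) (g : G) (M n : ℕ) :
    ((Finset.range (n + 1)).image (fun i : ℕ => biOf (relOf x) (i : ℤ))).image
        (fun h => g * h) \
      ((Finset.range (n + 1)).image (fun i : ℕ => biOf (relOf x) (i : ℤ))) ⊆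
    ((Finset.range (n + 1)).filter
      (fun j => j < M ∨ n < j + M ∨ (TT G)^[j] x ∈ ESet G g M)).image
        (fun j : ℕ => g * biOf (relOf x) (j : ℤ)) := by
  classical
  intro c hc
  rw [Finset.mem_sdiff] at hc
  obtain ⟨d, hd, rfl⟩ := Finset.mem_image.1 hc.1
  obtain ⟨j, hj, rfl⟩ := Finset.mem_image.1 hd
  refine Finset.mem_image.2 ⟨j, Finset.mem_filter.2 ⟨hj, ?_⟩, rfl⟩
  by_contra hcon
  push_neg at hcon
  obtain ⟨h1, h2, h3⟩ := hcon
  obtain ⟨k, hk, hbi⟩ := escape hx h3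
  rw [abs_le] at hk
  rw [Finset.mem_range] at hj
  apply hc.2
  set m : ℕ := (k + j).toNat with hm
  have hmj : (m : ℤ) = k + j := Int.toNat_of_nonneg (by omega)
  refine Finset.mem_image.2 ⟨m, ?_, ?_⟩
  · rw [Finset.mem_range]; omega
  · rw [hmj, hbi]

lemma coe_image_eq (f : ℤ → G) (n : ℕ) :
    ((Finset.range (n + 1)).image (fun i => f (i : ℤ))) =
      (Finset.range (n + 1)).image (fun i : ℕ => f (i : ℤ)) := by
  ext c
  simp only [Finset.mem_image]
  constructor
  · rintro ⟨i, hi, rfl⟩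
    simp only [Bind.bind, Pure.pure, Finset.bind_def, Finset.sup_eq_biUnion,
      Finset.mem_biUnion, Finset.mem_singleton] at hi
    obtain ⟨a, ha, rfl⟩ := hi
    exact ⟨a, ha, rfl⟩
  · rintro ⟨i, hi, rfl⟩
    refine ⟨(i : ℤ), ?_, rfl⟩
    simp only [Bind.bind, Pure.pure, Finset.bind_def, Finset.sup_eq_biUnion,
      Finset.mem_biUnion, Finset.mem_singleton]
    exact ⟨i, hi, rfl⟩

end Part6


/-- Theorem 2.6: every multiorder (a `G`-invariant Borel probability measure `ν`
concentrated on the orders of type ℤ) on a countable group `G` admitting a Følner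
sequence has the Følner property: for `ν`-almost every `≺`, the order intervals
`[e, b_n]^≺ = {bi_≺(0), …, bi_≺(n)}` form a Følner sequence in `G`. -/
theorem multiorder_folner_property {G : Type*} [Group G] [Countable G] [Infinite G]
    (hG : ∃ F : ℕ → Finset G, IsFolnerSeq F)
    (ν : Measure (G × G → Bool)) [IsProbabilityMeasure ν]
    (hsupp : ν (ZOrders G) = 1)
    (hinv : ∀ g : G, Measure.map (actB g) ν = ν) :
    ∀ᵐ x ∂ν, IsFolnerSeq
      (fun n => (Finset.range (n + 1)).image (fun i => biOf (relOf x) (i : ℤ))) := by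

  classical
  have hTT : MeasurePreserving (TT G) ν ν := measurePreserving_TT ν hsupp hinv
  have hZc : ν (ZOrders G)ᶜ = 0 := by
    have h := measure_compl measurableSet_ZOrders (measure_ne_top ν _)
    rw [hsupp, measure_univ] at h
    simpa using h
  set Mx : G → ℕ → ℝ → Set (G × G → Bool) := fun g M lam =>
    {x | ∃ n : ℕ, lam * (n + 1) < ∑ i ∈ Finset.range (n + 1),
      (ESet G g M).indicator (fun _ => (1:ℝ)) ((TT G)^[i] x)} with hMxdef
  have hEtend : ∀ g : G, Tendsto (fun M => (ν (ESet G g M)).toReal) atTop (nhds 0) := by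
    intro g
    have h1 : Tendsto (fun M => ν (ESet G g M)) atTop (nhds (ν (⋂ M, ESet G g M))) := by
      apply tendsto_measure_iInter_atTop
      · exact fun M => (measurableSet_ESet g M).nullMeasurableSet
      · exact fun M M' h => ESet_antitone g h
      · exact ⟨0, measure_ne_top ν _⟩
    rw [iInter_ESet, measure_empty] at h1
    have h2 := (ENNReal.tendsto_toReal (by simp : (0:ENNReal) ≠ ⊤)).comp h1
    simpa [Function.comp_def] using h2
  have hopf : ∀ (g : G) (M : ℕ) (lam : ℝ), 0 < lam →
      lam * (ν (Mx g M lam)).toReal ≤ (ν (ESet G g M)).toReal := by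
    intro g M lam hlam
    exact hopf_maximal ν (TT G) hTT (ESet G g M) (measurableSet_ESet g M) hlam
  have hnull : ∀ (g : G) (k : ℕ), ν (⋂ M : ℕ, Mx g M (1/((k:ℝ)+1))) = 0 := by
    intro g k
    set lam := 1/((k:ℝ)+1) with hlamdef
    have hlam : 0 < lam := by positivity
    have hb : ∀ M : ℕ, lam * (ν (⋂ M' : ℕ, Mx g M' lam)).toReal ≤ (ν (ESet G g M)).toReal := by
      intro M
      refine le_trans ?_ (hopf g M lam hlam)
      have h1 : ν (⋂ M' : ℕ, Mx g M' lam) ≤ ν (Mx g M lam) :=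
        measure_mono (Set.iInter_subset _ M)
      have h2 : (ν (⋂ M' : ℕ, Mx g M' lam)).toReal ≤ (ν (Mx g M lam)).toReal :=
        ENNReal.toReal_mono (measure_ne_top ν _) h1
      nlinarith
    have h3 : lam * (ν (⋂ M' : ℕ, Mx g M' lam)).toReal ≤ 0 :=
      ge_of_tendsto (hEtend g) (Filter.Eventually.of_forall hb)
    have h4 : (ν (⋂ M' : ℕ, Mx g M' lam)).toReal = 0 := by
      have := ENNReal.toReal_nonneg (a := ν (⋂ M' : ℕ, Mx g M' lam))
      nlinarith
    rcases (ENNReal.toReal_eq_zero_iff _).1 h4 with h | h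
    · exact h
    · exact absurd h (measure_ne_top ν _)
  have hbadnull : ν ((ZOrders G)ᶜ ∪
      ⋃ (g : G), ⋃ (k : ℕ), ⋂ (M : ℕ), Mx g M (1/((k:ℝ)+1))) = 0 :=
    measure_union_null hZc
      (measure_iUnion_null fun g => measure_iUnion_null fun k => hnull g k)
  rw [ae_iff]
  apply measure_mono_null _ hbadnull
  intro x hx
  simp only [Set.mem_setOf_eq] at hx
  by_contra hxbad
  apply hx
  have hxZ : x ∈ ZOrders G := by
    by_contra h
    exact hxbad (Set.mem_union_left _ h)
  have hxM : ∀ (g : G) (k : ℕ), ∃ M : ℕ, x ∉ Mx g M (1/((k:ℝ)+1)) := by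
    intro g k
    by_contra h
    push_neg at h
    exact hxbad (Set.mem_union_right _
      (Set.mem_iUnion.2 ⟨g, Set.mem_iUnion.2 ⟨k, Set.mem_iInter.2 h⟩⟩))
  have hgoal : (fun n => ((Finset.range (n + 1)).image
        (fun i => biOf (relOf x) (i : ℤ)) : Finset G)) =
      (fun n => (Finset.range (n + 1)).image (fun i : ℕ => biOf (relOf x) (i : ℤ))) :=
    funext fun n => coe_image_eq _ n
  rw [hgoal]
  constructor
  · intro n
    exact ⟨biOf (relOf x) ((0:ℕ):ℤ),
      Finset.mem_image.2 ⟨0, Finset.mem_range.2 n.succ_pos, rfl⟩⟩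
  · intro g
    rw [NormedAddCommGroup.tendsto_nhds_zero]
    intro ε hε
    obtain ⟨k, hk⟩ := exists_nat_gt (6/ε)
    have hlam6 : 1/((k:ℝ)+1) < ε/6 := by
      rw [div_lt_div_iff₀ (by positivity) (by norm_num)]
      have h6 : ε * (6/ε) = 6 := by field_simp
      nlinarith
    set lam := 1/((k:ℝ)+1) with hlamdef
    have hlam : 0 < lam := by positivity
    obtain ⟨M₁, hM₁⟩ := hxM g⁻¹ k
    obtain ⟨M₂, hM₂⟩ := hxM g k
    set M := max M₁ M₂ with hMdef
    have hsum : ∀ (h : G) (M₀ : ℕ), M₀ ≤ M → x ∉ Mx h M₀ lam → ∀ n : ℕ,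
        (((Finset.range (n+1)).filter (fun i => (TT G)^[i] x ∈ ESet G h M)).card : ℝ)
          ≤ lam * (n+1) := by
      intro h M₀ hM₀ hnot n
      have h1 : (((Finset.range (n+1)).filter
          (fun i => (TT G)^[i] x ∈ ESet G h M)).card : ℝ)
          = ∑ i ∈ Finset.range (n+1),
            (ESet G h M).indicator (fun _ => (1:ℝ)) ((TT G)^[i] x) := by
        simp only [Set.indicator_apply]
        rw [Finset.sum_boole]
      have h2 : ∑ i ∈ Finset.range (n+1),
            (ESet G h M).indicator (fun _ => (1:ℝ)) ((TT G)^[i] x)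
          ≤ ∑ i ∈ Finset.range (n+1),
            (ESet G h M₀).indicator (fun _ => (1:ℝ)) ((TT G)^[i] x) :=
        Finset.sum_le_sum fun i _ => Set.indicator_le_indicator_of_subset
          (ESet_antitone h hM₀) (fun _ => zero_le_one) _
      have h3 : ¬ (lam * (n+1) < ∑ i ∈ Finset.range (n+1),
          (ESet G h M₀).indicator (fun _ => (1:ℝ)) ((TT G)^[i] x)) :=
        fun hlt => hnot ⟨n, hlt⟩
      push_neg at h3
      rw [h1]
      linarith
    have hc1 := hsum g⁻¹ M₁ (le_max_left _ _) hM₁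
    have hc2 := hsum g M₂ (le_max_right _ _) hM₂
    obtain ⟨N, hN⟩ := exists_nat_gt (8*(M:ℝ)/ε)
    filter_upwards [eventually_ge_atTop N] with n hn
    set F := (Finset.range (n+1)).image (fun i : ℕ => biOf (relOf x) (i:ℤ)) with hFdef
    have hsd : (F ∆ F.image (fun h => g * h)).card ≤
        (2*M + ((Finset.range (n+1)).filter
          (fun i => (TT G)^[i] x ∈ ESet G g⁻¹ M)).card) +
        (2*M + ((Finset.range (n+1)).filter
          (fun j => (TT G)^[j] x ∈ ESet G g M)).card) := by
      have hsplit : F ∆ F.image (fun h => g * h) =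
          (F \ F.image (fun h => g * h)) ∪ (F.image (fun h => g * h) \ F) := by
        rw [symmDiff_def]
        rfl
      rw [hsplit]
      refine le_trans (Finset.card_union_le _ _) (Nat.add_le_add ?_ ?_)
      · refine le_trans (Finset.card_le_card (sdiff_sub hxZ g M n)) ?_
        refine le_trans Finset.card_image_le ?_
        exact filter_tri_card n M _
      · refine le_trans (Finset.card_le_card (imgdiff_sub hxZ g M n)) ?_
        refine le_trans Finset.card_image_le ?_
        exact filter_tri_card n M _
    have hsdR : ((F ∆ F.image (fun h => g * h)).card : ℝ)
        ≤ 4*M + (lam*(n+1) + lam*(n+1)) := by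
      have hcast := (Nat.cast_le (α := ℝ)).2 hsd
      push_cast at hcast
      have := hc1 n
      have := hc2 n
      linarith
    have hcard : F.card = n + 1 := F_card hxZ n
    show ‖((F ∆ F.image (fun h => g * h)).card : ℝ) / (F.card : ℝ)‖ < ε
    rw [hcard]
    have hn1 : (0:ℝ) < (n:ℝ) + 1 := by positivity
    rw [Real.norm_eq_abs, abs_of_nonneg (by positivity)]
    push_cast
    rw [div_lt_iff₀ hn1]
    have hNn : 8*(M:ℝ)/ε < (n:ℝ) + 1 := by
      have : (N:ℝ) ≤ n := Nat.cast_le.2 hn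
      linarith
    have h8 : 8*(M:ℝ) < ε * ((n:ℝ)+1) := by
      rw [div_lt_iff₀ hε] at hNn
      linarith [mul_comm ε ((n:ℝ)+1)]
    have hlamb : lam * ((n:ℝ)+1) < ε/6 * ((n:ℝ)+1) := by
      apply mul_lt_mul_of_pos_right hlam6 hn1
    calc ((F ∆ F.image (fun h => g * h)).card : ℝ)
        ≤ 4*M + (lam*((n:ℝ)+1) + lam*((n:ℝ)+1)) := by
          convert hsdR using 2 <;> push_cast <;> ring
      _ < ε * ((n:ℝ)+1) := by nlinarith
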